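/- Assume ‖∇l_S(v) − ∇l_T(v)‖ ≤ b for every v ∈ ℝ^d, and define the constants C_b = C_𝓛 = (αρ + (ρ/L)(1 + αL)^{N−1})(1 + αL)^{2N}. Then for every w, u ∈ ℝ^d the finite-sum meta gradient satisfies ‖G(w) − G(u)‖ ≤ ((1 + αL)^{2N} L + C_b b + C_𝓛 ‖∇l_T(w)‖) ‖w − u‖. -/

import Mathlib

open MeasureTheory

noncomputable def innerPath {d : ℕ} (α : ℝ) (l : EuclideanSpace ℝ (Fin d) → ℝ) :
    ℕ → EuclideanSpace ℝ (Fin d) → EuclideanSpace ℝ (Fin d)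
  | 0, w => w
  | j + 1, w => innerPath α l j w - α • gradient l (innerPath α l j w)

noncomputable def hessProd {d : ℕ} (α : ℝ) (N : ℕ)
    (lS : EuclideanSpace ℝ (Fin d) → ℝ) (w : EuclideanSpace ℝ (Fin d)) :
    EuclideanSpace ℝ (Fin d) →L[ℝ] EuclideanSpace ℝ (Fin d) :=
  ((List.range N).map fun j =>
    ContinuousLinearMap.id ℝ (EuclideanSpace ℝ (Fin d)) -
      α • fderiv ℝ (gradient lS) (innerPath α lS j w)).prod

noncomputable def metaGrad {d : ℕ} (α : ℝ) (N : ℕ)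
    (lS lT : EuclideanSpace ℝ (Fin d) → ℝ) (w : EuclideanSpace ℝ (Fin d)) :
    EuclideanSpace ℝ (Fin d) :=
  hessProd α N lS w (gradient lT (innerPath α lS N w))

section Aux

variable {d : ℕ} {α L ρ : ℝ} {lS : EuclideanSpace ℝ (Fin d) → ℝ}

lemma hess_norm_le (hL : 0 < L)
    (hgradS : ∀ w u : EuclideanSpace ℝ (Fin d), ‖gradient lS w - gradient lS u‖ ≤ L * ‖w - u‖)
    (v : EuclideanSpace ℝ (Fin d)) : ‖fderiv ℝ (gradient lS) v‖ ≤ L := by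
  have hlip : LipschitzWith L.toNNReal (gradient lS) := by
    apply LipschitzWith.of_dist_le_mul
    intro x y
    rw [dist_eq_norm, dist_eq_norm, Real.coe_toNNReal _ hL.le]
    exact hgradS x y
  calc ‖fderiv ℝ (gradient lS) v‖ ≤ (L.toNNReal : ℝ) := norm_fderiv_le_of_lipschitz ℝ hlip
    _ = L := Real.coe_toNNReal _ hL.le

lemma path_lip (hα : 0 < α) (hL : 0 < L)
    (hgradS : ∀ w u : EuclideanSpace ℝ (Fin d), ‖gradient lS w - gradient lS u‖ ≤ L * ‖w - u‖)
    (j : ℕ) (w u : EuclideanSpace ℝ (Fin d)) :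
    ‖innerPath α lS j w - innerPath α lS j u‖ ≤ (1 + α * L) ^ j * ‖w - u‖ := by
  induction j with
  | zero => simp [innerPath]
  | succ j ih =>
    have h1 : innerPath α lS (j+1) w - innerPath α lS (j+1) u =
        (innerPath α lS j w - innerPath α lS j u) -
          α • (gradient lS (innerPath α lS j w) - gradient lS (innerPath α lS j u)) := by
      simp [innerPath, smul_sub]; abel
    rw [h1]
    calc ‖_ - _‖ ≤ ‖innerPath α lS j w - innerPath α lS j u‖ +
          ‖α • (gradient lS (innerPath α lS j w) - gradient lS (innerPath α lS j u))‖ :=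
        norm_sub_le _ _
      _ ≤ ‖innerPath α lS j w - innerPath α lS j u‖ +
          α * (L * ‖innerPath α lS j w - innerPath α lS j u‖) := by
        rw [norm_smul, Real.norm_eq_abs, abs_of_pos hα]
        have := hgradS (innerPath α lS j w) (innerPath α lS j u)
        nlinarith
      _ = (1 + α * L) * ‖innerPath α lS j w - innerPath α lS j u‖ := by ring
      _ ≤ (1 + α * L) * ((1 + α * L) ^ j * ‖w - u‖) := by
        apply mul_le_mul_of_nonneg_left ih; nlinarith
      _ = (1 + α * L) ^ (j+1) * ‖w - u‖ := by ring

lemma grad_path_le (hα : 0 < α) (hL : 0 < L)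
    (hgradS : ∀ w u : EuclideanSpace ℝ (Fin d), ‖gradient lS w - gradient lS u‖ ≤ L * ‖w - u‖)
    (j : ℕ) (w : EuclideanSpace ℝ (Fin d)) :
    ‖gradient lS (innerPath α lS j w)‖ ≤ (1 + α * L) ^ j * ‖gradient lS w‖ := by
  induction j with
  | zero => simp [innerPath]
  | succ j ih =>
    have hstep : ‖gradient lS (innerPath α lS (j+1) w) - gradient lS (innerPath α lS j w)‖ ≤
        L * (α * ‖gradient lS (innerPath α lS j w)‖) := by
      have h1 := hgradS (innerPath α lS (j+1) w) (innerPath α lS j w)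
      have h2 : innerPath α lS (j+1) w - innerPath α lS j w =
          -(α • gradient lS (innerPath α lS j w)) := by simp [innerPath]
      rw [h2, norm_neg, norm_smul, Real.norm_eq_abs, abs_of_pos hα] at h1
      linarith
    calc ‖gradient lS (innerPath α lS (j+1) w)‖
        ≤ ‖gradient lS (innerPath α lS j w)‖ +
          ‖gradient lS (innerPath α lS (j+1) w) - gradient lS (innerPath α lS j w)‖ := by
          have := norm_add_le (gradient lS (innerPath α lS j w))
            (gradient lS (innerPath α lS (j+1) w) - gradient lS (innerPath α lS j w))
          simpa using this
      _ ≤ (1 + α * L) * ‖gradient lS (innerPath α lS j w)‖ := by nlinarith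
      _ ≤ (1 + α * L) * ((1 + α * L) ^ j * ‖gradient lS w‖) := by
          apply mul_le_mul_of_nonneg_left ih; nlinarith
      _ = (1 + α * L) ^ (j+1) * ‖gradient lS w‖ := by ring

lemma path_drift (hα : 0 < α) (hL : 0 < L)
    (hgradS : ∀ w u : EuclideanSpace ℝ (Fin d), ‖gradient lS w - gradient lS u‖ ≤ L * ‖w - u‖)
    (N : ℕ) (w : EuclideanSpace ℝ (Fin d)) :
    L * ‖innerPath α lS N w - w‖ ≤ ((1 + α * L) ^ N - 1) * ‖gradient lS w‖ := by
  induction N with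
  | zero => simp [innerPath]
  | succ N ih =>
    have h2 : innerPath α lS (N+1) w - w =
        (innerPath α lS N w - w) - α • gradient lS (innerPath α lS N w) := by
      simp [innerPath]; abel
    have h3 : ‖innerPath α lS (N+1) w - w‖ ≤ ‖innerPath α lS N w - w‖ +
        α * ‖gradient lS (innerPath α lS N w)‖ := by
      rw [h2]
      calc _ ≤ ‖innerPath α lS N w - w‖ + ‖α • gradient lS (innerPath α lS N w)‖ :=
          norm_sub_le _ _
        _ = _ := by rw [norm_smul, Real.norm_eq_abs, abs_of_pos hα]
    have h4 := grad_path_le hα hL hgradS N w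
    have hx : (0:ℝ) ≤ (1 + α * L) ^ N := by positivity
    have hps : (1 + α * L) ^ (N+1) = (1 + α * L) ^ N * (1 + α * L) := pow_succ _ _
    nlinarith [norm_nonneg (gradient lS w), mul_le_mul_of_nonneg_left h3 hL.le,
      mul_le_mul_of_nonneg_left h4 (mul_pos hα hL).le]

lemma hessProd_succ (w : EuclideanSpace ℝ (Fin d)) (N : ℕ) :
    hessProd α (N+1) lS w = hessProd α N lS w *
      (ContinuousLinearMap.id ℝ (EuclideanSpace ℝ (Fin d)) -
        α • fderiv ℝ (gradient lS) (innerPath α lS N w)) := by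
  unfold hessProd
  rw [List.range_succ, List.map_append, List.prod_append]
  simp

lemma factor_norm_le (hα : 0 < α) (hL : 0 < L)
    (hgradS : ∀ w u : EuclideanSpace ℝ (Fin d), ‖gradient lS w - gradient lS u‖ ≤ L * ‖w - u‖)
    (v : EuclideanSpace ℝ (Fin d)) :
    ‖ContinuousLinearMap.id ℝ (EuclideanSpace ℝ (Fin d)) -
      α • fderiv ℝ (gradient lS) v‖ ≤ 1 + α * L := by
  calc ‖_ - _‖ ≤ ‖ContinuousLinearMap.id ℝ (EuclideanSpace ℝ (Fin d))‖ +
        ‖α • fderiv ℝ (gradient lS) v‖ := norm_sub_le _ _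
    _ ≤ 1 + α * L := by
      rw [norm_smul, Real.norm_eq_abs, abs_of_pos hα]
      have h1 := ContinuousLinearMap.norm_id_le (E := EuclideanSpace ℝ (Fin d)) (𝕜 := ℝ)
      have h2 := hess_norm_le hL hgradS v
      nlinarith

lemma hessProd_norm_le (hα : 0 < α) (hL : 0 < L)
    (hgradS : ∀ w u : EuclideanSpace ℝ (Fin d), ‖gradient lS w - gradient lS u‖ ≤ L * ‖w - u‖)
    (N : ℕ) (w : EuclideanSpace ℝ (Fin d)) :
    ‖hessProd α N lS w‖ ≤ (1 + α * L) ^ N := by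
  induction N with
  | zero =>
    show ‖(List.prod _)‖ ≤ _
    simp only [List.range_zero, List.map_nil, List.prod_nil, pow_zero]
    exact ContinuousLinearMap.norm_id_le
  | succ N ih =>
    rw [hessProd_succ]
    calc ‖_‖ ≤ ‖hessProd α N lS w‖ * ‖_ - _‖ := norm_mul_le _ _
      _ ≤ (1 + α * L) ^ N * (1 + α * L) := by
        apply mul_le_mul ih (factor_norm_le hα hL hgradS _) (norm_nonneg _) (by positivity)
      _ = (1 + α * L) ^ (N+1) := (pow_succ _ _).symm


lemma hessProd_lip (hα : 0 < α) (hL : 0 < L) (hρ : 0 < ρ)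
    (hgradS : ∀ w u : EuclideanSpace ℝ (Fin d), ‖gradient lS w - gradient lS u‖ ≤ L * ‖w - u‖)
    (hhessS : ∀ w u : EuclideanSpace ℝ (Fin d),
      ‖fderiv ℝ (gradient lS) w - fderiv ℝ (gradient lS) u‖ ≤ ρ * ‖w - u‖)
    (N : ℕ) (w u : EuclideanSpace ℝ (Fin d)) :
    ‖hessProd α N lS w - hessProd α N lS u‖ ≤
      ρ / (L * (1 + α * L)) * ((1 + α * L) ^ N - 1) * (1 + α * L) ^ N * ‖w - u‖ := by
  induction N with
  | zero =>
    simp only [hessProd, List.range_zero, List.map_nil, List.prod_nil, sub_self, norm_zero,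
      pow_zero, mul_zero, zero_mul, one_mul]
    positivity
  | succ N ih =>
    have hx : (0:ℝ) < 1 + α * L := by positivity
    have hxN : (0:ℝ) < (1 + α * L) ^ N := by positivity
    have hxN1 : (1:ℝ) ≤ (1 + α * L) ^ N := one_le_pow₀ (by nlinarith)
    have hsplit : hessProd α (N+1) lS w - hessProd α (N+1) lS u =
        (hessProd α N lS w - hessProd α N lS u) *
          (ContinuousLinearMap.id ℝ (EuclideanSpace ℝ (Fin d)) -
            α • fderiv ℝ (gradient lS) (innerPath α lS N w)) +
        hessProd α N lS u *
          ((ContinuousLinearMap.id ℝ (EuclideanSpace ℝ (Fin d)) -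
            α • fderiv ℝ (gradient lS) (innerPath α lS N w)) -
           (ContinuousLinearMap.id ℝ (EuclideanSpace ℝ (Fin d)) -
            α • fderiv ℝ (gradient lS) (innerPath α lS N u))) := by
      rw [hessProd_succ, hessProd_succ]
      simp only [mul_sub, sub_mul]
      abel
    have hAdiff : ‖(ContinuousLinearMap.id ℝ (EuclideanSpace ℝ (Fin d)) -
            α • fderiv ℝ (gradient lS) (innerPath α lS N w)) -
           (ContinuousLinearMap.id ℝ (EuclideanSpace ℝ (Fin d)) -
            α • fderiv ℝ (gradient lS) (innerPath α lS N u))‖ ≤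
        α * ρ * ((1 + α * L) ^ N * ‖w - u‖) := by
      have h1 : (ContinuousLinearMap.id ℝ (EuclideanSpace ℝ (Fin d)) -
            α • fderiv ℝ (gradient lS) (innerPath α lS N w)) -
           (ContinuousLinearMap.id ℝ (EuclideanSpace ℝ (Fin d)) -
            α • fderiv ℝ (gradient lS) (innerPath α lS N u)) =
          α • (fderiv ℝ (gradient lS) (innerPath α lS N u) -
            fderiv ℝ (gradient lS) (innerPath α lS N w)) := by
        rw [smul_sub]; abel
      rw [h1]
      have hns := norm_smul α (fderiv ℝ (gradient lS) (innerPath α lS N u) -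
        fderiv ℝ (gradient lS) (innerPath α lS N w))
      rw [hns, Real.norm_eq_abs, abs_of_pos hα]
      have h2 := hhessS (innerPath α lS N u) (innerPath α lS N w)
      have h3 : ‖innerPath α lS N u - innerPath α lS N w‖ ≤ (1 + α * L) ^ N * ‖w - u‖ := by
        rw [← norm_neg, neg_sub]; exact path_lip hα hL hgradS N w u
      nlinarith [mul_le_mul_of_nonneg_left h3 hρ.le]
    have hP := hessProd_norm_le hα hL hgradS N u
    have hA := factor_norm_le hα hL hgradS (innerPath α lS N w)
    have hB1 : (0:ℝ) ≤ ρ / (L * (1 + α * L)) * ((1 + α * L) ^ N - 1) * (1 + α * L) ^ N * ‖w - u‖ :=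
      mul_nonneg (mul_nonneg (mul_nonneg (by positivity) (by linarith)) hxN.le) (norm_nonneg _)
    rw [hsplit]
    calc ‖_ + _‖ ≤ ‖(hessProd α N lS w - hessProd α N lS u) *
          (ContinuousLinearMap.id ℝ (EuclideanSpace ℝ (Fin d)) -
            α • fderiv ℝ (gradient lS) (innerPath α lS N w))‖ +
          ‖hessProd α N lS u *
          ((ContinuousLinearMap.id ℝ (EuclideanSpace ℝ (Fin d)) -
            α • fderiv ℝ (gradient lS) (innerPath α lS N w)) -
           (ContinuousLinearMap.id ℝ (EuclideanSpace ℝ (Fin d)) -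
            α • fderiv ℝ (gradient lS) (innerPath α lS N u)))‖ := norm_add_le _ _
      _ ≤ ‖hessProd α N lS w - hessProd α N lS u‖ *
          ‖ContinuousLinearMap.id ℝ (EuclideanSpace ℝ (Fin d)) -
            α • fderiv ℝ (gradient lS) (innerPath α lS N w)‖ +
          ‖hessProd α N lS u‖ *
          ‖(ContinuousLinearMap.id ℝ (EuclideanSpace ℝ (Fin d)) -
            α • fderiv ℝ (gradient lS) (innerPath α lS N w)) -
           (ContinuousLinearMap.id ℝ (EuclideanSpace ℝ (Fin d)) -
            α • fderiv ℝ (gradient lS) (innerPath α lS N u))‖ :=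
        add_le_add (norm_mul_le _ _) (norm_mul_le _ _)
      _ ≤ (ρ / (L * (1 + α * L)) * ((1 + α * L) ^ N - 1) * (1 + α * L) ^ N * ‖w - u‖) *
            (1 + α * L) + (1 + α * L) ^ N * (α * ρ * ((1 + α * L) ^ N * ‖w - u‖)) :=
        add_le_add (mul_le_mul ih hA (norm_nonneg _) hB1)
          (mul_le_mul hP hAdiff (norm_nonneg _) hxN.le)
      _ = ρ / (L * (1 + α * L)) * ((1 + α * L) ^ (N+1) - 1) * (1 + α * L) ^ (N+1) * ‖w - u‖ := by
        field_simp
        ring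

end Aux

theorem stmt13 {d : ℕ} (hd : 1 ≤ d) (α L ρ b : ℝ) (hα : 0 < α) (hL : 0 < L) (hρ : 0 < ρ)
    (hb : 0 ≤ b) (N : ℕ) (hN : 1 ≤ N)
    (lS lT : EuclideanSpace ℝ (Fin d) → ℝ) (hlS : ContDiff ℝ 2 lS) (hlT : ContDiff ℝ 2 lT)
    (hgradS : ∀ w u : EuclideanSpace ℝ (Fin d), ‖gradient lS w - gradient lS u‖ ≤ L * ‖w - u‖)
    (hgradT : ∀ w u : EuclideanSpace ℝ (Fin d), ‖gradient lT w - gradient lT u‖ ≤ L * ‖w - u‖)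
    (hhessS : ∀ w u : EuclideanSpace ℝ (Fin d),
      ‖fderiv ℝ (gradient lS) w - fderiv ℝ (gradient lS) u‖ ≤ ρ * ‖w - u‖)
    (hhessT : ∀ w u : EuclideanSpace ℝ (Fin d),
      ‖fderiv ℝ (gradient lT) w - fderiv ℝ (gradient lT) u‖ ≤ ρ * ‖w - u‖)
    (hdiffb : ∀ v : EuclideanSpace ℝ (Fin d), ‖gradient lS v - gradient lT v‖ ≤ b) :
    ∀ w u : EuclideanSpace ℝ (Fin d),
      ‖metaGrad α N lS lT w - metaGrad α N lS lT u‖ ≤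
        ((1 + α * L) ^ (2 * N) * L +
          ((α * ρ + (ρ / L) * (1 + α * L) ^ (N - 1)) * (1 + α * L) ^ (2 * N)) * b +
          ((α * ρ + (ρ / L) * (1 + α * L) ^ (N - 1)) * (1 + α * L) ^ (2 * N)) *
            ‖gradient lT w‖) * ‖w - u‖ := by
  intro w u
  obtain ⟨M, rfl⟩ : ∃ M, N = M + 1 := ⟨N - 1, (Nat.succ_pred_eq_of_pos hN).symm⟩
  set N := M + 1 with hNdef
  have hx : (0:ℝ) < 1 + α * L := by positivity
  have hxN : (0:ℝ) < (1 + α * L) ^ N := by positivity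
  have hxN1 : (1:ℝ) ≤ (1 + α * L) ^ N := one_le_pow₀ (by nlinarith)
  have hpow : (1 + α * L) ^ (2 * N) = (1 + α * L) ^ N * (1 + α * L) ^ N := by
    rw [two_mul, pow_add]
  have hG : (0:ℝ) ≤ ‖gradient lT w‖ := norm_nonneg _
  -- decomposition
  have key : metaGrad α N lS lT w - metaGrad α N lS lT u =
      (hessProd α N lS w - hessProd α N lS u) (gradient lT (innerPath α lS N w)) +
      (hessProd α N lS u)
        (gradient lT (innerPath α lS N w) - gradient lT (innerPath α lS N u)) := by
    simp only [metaGrad, ContinuousLinearMap.sub_apply, map_sub]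
    abel
  -- bound on gradient at the path endpoint
  have hgw : ‖gradient lT (innerPath α lS N w)‖ ≤ (1 + α * L) ^ N * (b + ‖gradient lT w‖) := by
    have ha : ‖gradient lT (innerPath α lS N w) - gradient lT w‖ ≤
        L * ‖innerPath α lS N w - w‖ := hgradT _ _
    have hdrift := path_drift hα hL hgradS N w
    have hc : ‖gradient lS w‖ ≤ b + ‖gradient lT w‖ := by
      have h1 := hdiffb w
      have h2 := norm_sub_norm_le (gradient lS w) (gradient lT w)
      linarith
    have htri : ‖gradient lT (innerPath α lS N w)‖ ≤
        ‖gradient lT w‖ + ‖gradient lT (innerPath α lS N w) - gradient lT w‖ := by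
      have := norm_add_le (gradient lT w)
        (gradient lT (innerPath α lS N w) - gradient lT w)
      simpa using this
    nlinarith [norm_nonneg (gradient lS w)]
  -- Lipschitz bound on hessProd
  have hPlip := hessProd_lip hα hL hρ hgradS hhessS N w u
  have hPnorm := hessProd_norm_le hα hL hgradS N u
  have hgdiff : ‖gradient lT (innerPath α lS N w) - gradient lT (innerPath α lS N u)‖ ≤
      L * ((1 + α * L) ^ N * ‖w - u‖) :=
    le_trans (hgradT _ _) (mul_le_mul_of_nonneg_left (path_lip hα hL hgradS N w u) hL.le)
  have hB1 : (0:ℝ) ≤ ρ / (L * (1 + α * L)) * ((1 + α * L) ^ N - 1) * (1 + α * L) ^ N * ‖w - u‖ :=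
    mul_nonneg (mul_nonneg (mul_nonneg (by positivity) (by linarith)) hxN.le) (norm_nonneg _)
  -- key constant inequality
  have hkey : ρ / (L * (1 + α * L)) * ((1 + α * L) ^ N - 1) ≤
      α * ρ + ρ / L * (1 + α * L) ^ M := by
    calc ρ / (L * (1 + α * L)) * ((1 + α * L) ^ N - 1)
        ≤ ρ / (L * (1 + α * L)) * ((1 + α * L) ^ M * (1 + α * L)) := by
          apply mul_le_mul_of_nonneg_left _ (by positivity)
          rw [hNdef, pow_succ]; linarith
      _ = ρ / L * (1 + α * L) ^ M := by field_simp
      _ ≤ α * ρ + ρ / L * (1 + α * L) ^ M := by nlinarith [pow_pos hx M]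
  have hC : ρ / (L * (1 + α * L)) * ((1 + α * L) ^ N - 1) * (1 + α * L) ^ N * (1 + α * L) ^ N ≤
      (α * ρ + ρ / L * (1 + α * L) ^ M) * (1 + α * L) ^ (2 * N) := by
    rw [hpow]
    calc ρ / (L * (1 + α * L)) * ((1 + α * L) ^ N - 1) * (1 + α * L) ^ N * (1 + α * L) ^ N
        = ρ / (L * (1 + α * L)) * ((1 + α * L) ^ N - 1) *
            ((1 + α * L) ^ N * (1 + α * L) ^ N) := by ring
      _ ≤ (α * ρ + ρ / L * (1 + α * L) ^ M) * ((1 + α * L) ^ N * (1 + α * L) ^ N) :=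
          mul_le_mul_of_nonneg_right hkey (by positivity)
  -- assemble
  rw [key]
  have hNsub : N - 1 = M := by rw [hNdef]; omega
  rw [hNsub]
  calc ‖_ + _‖
      ≤ ‖(hessProd α N lS w - hessProd α N lS u) (gradient lT (innerPath α lS N w))‖ +
        ‖(hessProd α N lS u)
          (gradient lT (innerPath α lS N w) - gradient lT (innerPath α lS N u))‖ :=
        norm_add_le _ _
    _ ≤ ‖hessProd α N lS w - hessProd α N lS u‖ * ‖gradient lT (innerPath α lS N w)‖ +
        ‖hessProd α N lS u‖ *
          ‖gradient lT (innerPath α lS N w) - gradient lT (innerPath α lS N u)‖ :=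
        add_le_add (ContinuousLinearMap.le_opNorm _ _) (ContinuousLinearMap.le_opNorm _ _)
    _ ≤ (ρ / (L * (1 + α * L)) * ((1 + α * L) ^ N - 1) * (1 + α * L) ^ N * ‖w - u‖) *
          ((1 + α * L) ^ N * (b + ‖gradient lT w‖)) +
        (1 + α * L) ^ N * (L * ((1 + α * L) ^ N * ‖w - u‖)) :=
        add_le_add (mul_le_mul hPlip hgw (norm_nonneg _) hB1)
          (mul_le_mul hPnorm hgdiff (norm_nonneg _) hxN.le)
    _ = (ρ / (L * (1 + α * L)) * ((1 + α * L) ^ N - 1) * (1 + α * L) ^ N * (1 + α * L) ^ N) *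
          ((b + ‖gradient lT w‖) * ‖w - u‖) + (1 + α * L) ^ (2 * N) * L * ‖w - u‖ := by
        rw [hpow]; ring
    _ ≤ ((α * ρ + ρ / L * (1 + α * L) ^ M) * (1 + α * L) ^ (2 * N)) *
          ((b + ‖gradient lT w‖) * ‖w - u‖) + (1 + α * L) ^ (2 * N) * L * ‖w - u‖ :=
        add_le_add_left (mul_le_mul_of_nonneg_right hC
          (mul_nonneg (add_nonneg hb hG) (norm_nonneg _))) _
    _ = ((1 + α * L) ^ (2 * N) * L +
          ((α * ρ + ρ / L * (1 + α * L) ^ M) * (1 + α * L) ^ (2 * N)) * b +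
          ((α * ρ + ρ / L * (1 + α * L) ^ M) * (1 + α * L) ^ (2 * N)) *
            ‖gradient lT w‖) * ‖w - u‖ := by ring
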